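/- Let α be a real number with 0 < α < π. Then F(1,α) = 1, and for every real η with 0 < η < 1, one has −2α(2π−α)/(α² + (2π−α)²) < F(η,α) < 1. -/
import Mathlib


open Real

/-- Key sinc monotonicity: for `0 < x < y ≤ π`, `x * sin y < y * sin x`. -/
lemma sinc_strict {x y : ℝ} (hx : 0 < x) (hxy : x < y) (hy : y ≤ Real.pi) :
    x * Real.sin y < y * Real.sin x := by
  have hy0 : 0 < y := hx.trans hxy
  have h := strictConcaveOn_sin_Icc.2 (x := 0) (y := y)
      (Set.mem_Icc.2 ⟨le_rfl, Real.pi_pos.le⟩) (Set.mem_Icc.2 ⟨hy0.le, hy⟩)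
      hy0.ne (show (0:ℝ) < 1 - x / y by rw [sub_pos, div_lt_one hy0]; exact hxy)
      (div_pos hx hy0) (by ring)
  simp only [smul_eq_mul, mul_zero, Real.sin_zero, zero_add,
    div_mul_cancel₀ _ hy0.ne'] at h
  rw [div_mul_eq_mul_div, div_lt_iff₀ hy0] at h
  linarith

/-- The dispersion function of the transmission problem at a corner of opening `α`. -/
noncomputable def F (η α : ℝ) : ℝ :=
  Real.sin (α * η) * Real.sin ((2 * Real.pi - α) * η) /
    (Real.cos (α * η) * Real.cos ((2 * Real.pi - α) * η) - 1)

set_option maxHeartbeats 1000000 in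
theorem dispersion_range
    (α : ℝ) (hα0 : 0 < α) (hαπ : α < Real.pi) :
    F 1 α = 1 ∧
    ∀ η : ℝ, 0 < η → η < 1 →
      -2 * α * (2 * Real.pi - α) / (α ^ 2 + (2 * Real.pi - α) ^ 2) < F η α ∧ F η α < 1 := by
  have hsinα : 0 < Real.sin α := Real.sin_pos_of_pos_of_lt_pi hα0 hαπ
  constructor
  · have h2 : Real.sin (2 * Real.pi - α) = -Real.sin α := by
      rw [Real.sin_sub, Real.sin_two_pi, Real.cos_two_pi]; ring
    have h3 : Real.cos (2 * Real.pi - α) = Real.cos α := by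
      rw [Real.cos_sub, Real.sin_two_pi, Real.cos_two_pi]; ring
    have hpy := Real.sin_sq_add_cos_sq α
    simp only [F, mul_one, h2, h3]
    rw [div_eq_one_iff_eq (by nlinarith)]
    nlinarith
  · intro η hη0 hη1
    simp only [F]
    have hπ := Real.pi_pos
    have ha0 : 0 < α * η := mul_pos hα0 hη0
    have haπ : α * η < Real.pi := by
      calc α * η < α * 1 := by apply mul_lt_mul_of_pos_left hη1 hα0
        _ = α := mul_one α
        _ < Real.pi := hαπ
    -- denominator is negative
    have hca1 : Real.cos (α * η) < 1 := by
      have := Real.cos_lt_cos_of_nonneg_of_le_pi (le_refl 0) (by linarith) ha0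
      simpa using this
    have hca2 : -1 < Real.cos (α * η) := by
      have := Real.cos_lt_cos_of_nonneg_of_le_pi ha0.le (le_refl Real.pi) haπ
      simpa using this
    have habs : Real.cos (α * η) * Real.cos ((2 * Real.pi - α) * η) ≤ |Real.cos (α * η)| := by
      calc Real.cos (α * η) * Real.cos ((2 * Real.pi - α) * η)
          ≤ |Real.cos (α * η) * Real.cos ((2 * Real.pi - α) * η)| := le_abs_self _
        _ = |Real.cos (α * η)| * |Real.cos ((2 * Real.pi - α) * η)| := abs_mul _ _
        _ ≤ |Real.cos (α * η)| * 1 :=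
            mul_le_mul_of_nonneg_left (Real.abs_cos_le_one _) (abs_nonneg _)
        _ = |Real.cos (α * η)| := mul_one _
    have habs2 : |Real.cos (α * η)| < 1 := abs_lt.2 ⟨hca2, hca1⟩
    have hden : Real.cos (α * η) * Real.cos ((2 * Real.pi - α) * η) - 1 < 0 := by linarith
    -- product-to-sum identities
    have hβ0 : 0 < Real.pi - α := by linarith
    have e1 : α * η + (2 * Real.pi - α) * η = 2 * (Real.pi * η) := by ring
    have e2 : α * η - (2 * Real.pi - α) * η = -(2 * ((Real.pi - α) * η)) := by ring
    have hcadd : Real.cos (α * η + (2 * Real.pi - α) * η)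
        = 1 - 2 * Real.sin (Real.pi * η) ^ 2 := by
      rw [e1, Real.cos_two_mul, ← Real.sin_sq_add_cos_sq (Real.pi * η)]; ring
    have hcsub : Real.cos (α * η - (2 * Real.pi - α) * η)
        = 1 - 2 * Real.sin ((Real.pi - α) * η) ^ 2 := by
      rw [e2, Real.cos_neg, Real.cos_two_mul, ← Real.sin_sq_add_cos_sq ((Real.pi - α) * η)]
      ring
    have hc1 := Real.cos_add (α * η) ((2 * Real.pi - α) * η)
    have hc2 := Real.cos_sub (α * η) ((2 * Real.pi - α) * η)
    have hss : Real.sin (α * η) * Real.sin ((2 * Real.pi - α) * η)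
        = Real.sin (Real.pi * η) ^ 2 - Real.sin ((Real.pi - α) * η) ^ 2 := by linarith
    have hcc : Real.cos (α * η) * Real.cos ((2 * Real.pi - α) * η)
        = 1 - Real.sin ((Real.pi - α) * η) ^ 2 - Real.sin (Real.pi * η) ^ 2 := by linarith
    have hsT : 0 < Real.sin (Real.pi * η) :=
      Real.sin_pos_of_pos_of_lt_pi (mul_pos hπ hη0) (by nlinarith)
    have hsS : 0 < Real.sin ((Real.pi - α) * η) :=
      Real.sin_pos_of_pos_of_lt_pi (mul_pos hβ0 hη0) (by nlinarith)
    constructor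
    · -- lower bound
      have hkey := sinc_strict (x := (Real.pi - α) * η) (y := Real.pi * η)
        (mul_pos hβ0 hη0) (by nlinarith) (by nlinarith)
      have hkey2 : (Real.pi - α) * Real.sin (Real.pi * η)
          < Real.pi * Real.sin ((Real.pi - α) * η) := by nlinarith
      have hprod := mul_pos (sub_pos.2 hkey2)
        (show 0 < Real.pi * Real.sin ((Real.pi - α) * η)
            + (Real.pi - α) * Real.sin (Real.pi * η) by
          have h1 := mul_pos hπ hsS
          have h2 := mul_pos hβ0 hsT
          linarith)
      have hsq : (Real.pi - α) ^ 2 * Real.sin (Real.pi * η) ^ 2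
          < Real.pi ^ 2 * Real.sin ((Real.pi - α) * η) ^ 2 := by nlinarith [hprod]
      have hLden : 0 < α ^ 2 + (2 * Real.pi - α) ^ 2 := by positivity
      rw [lt_div_iff_of_neg hden, div_mul_eq_mul_div, lt_div_iff₀ hLden, hss, hcc]
      nlinarith [hsq]
    · -- upper bound
      rw [div_lt_iff_of_neg hden, hss, hcc]
      nlinarith [hsT]
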